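/- Let X be an arbitrary topological space that is not finitely generated. Then there exists a filter space Y whose underlying set has the same cardinality as that of X and such that CH({Y}) = SCH({X}), i.e., the coreflective hull of Y equals the class of all subspaces of spaces belonging to the coreflective hull of X. -/

import Mathlib

universe u v

/-- A class of topological spaces (in universe `u`): a predicate on spaces. -/
abbrev TopClass : Type (u + 1) := (X : Type u) → TopologicalSpace X → Prop

/-- A class of topological spaces is coreflective if it is closed under the formation of
topological sums and quotient spaces. -/
def IsCoreflective (C : TopClass.{u}) : Prop :=
  (∀ (ι : Type u) (X : ι → Type u) (t : (i : ι) → TopologicalSpace (X i)),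
      (∀ i, C (X i) (t i)) → C ((i : ι) × X i) (@instTopologicalSpaceSigma ι X t)) ∧
  (∀ (X Y : Type u) (tX : TopologicalSpace X) (tY : TopologicalSpace Y) (f : X → Y),
      @Topology.IsQuotientMap X Y tX tY f → C X tX → C Y tY)

/-- The coreflective hull of a class of spaces: the smallest coreflective class containing it. -/
def CH (A : TopClass.{u}) : TopClass.{u} :=
  fun X tX => ∀ C : TopClass.{u}, IsCoreflective C → (∀ Y tY, A Y tY → C Y tY) → C X tX

/-- `SCH A` is the class of all subspaces of members of `CH A`. -/
def SCH (A : TopClass.{u}) : TopClass.{u} :=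
  fun X tX => ∃ (Y : Type u) (tY : TopologicalSpace Y) (f : X → Y),
    CH A Y tY ∧ @Topology.IsEmbedding X Y tX tY f

/-- The class consisting of (the spaces homeomorphic to) a single space `A`. -/
def singleClass (A : Type u) (tA : TopologicalSpace A) : TopClass.{u} :=
  fun Y tY => Nonempty (@Homeomorph Y A tY tA)

/-- A class of topological spaces is hereditary if it is closed under subspaces. -/
def IsHereditary (C : TopClass.{u}) : Prop :=
  ∀ (X : Type u) (tX : TopologicalSpace X), C X tX →
    ∀ (Z : Type u) (tZ : TopologicalSpace Z) (f : Z → X), @Topology.IsEmbedding Z X tZ tX f →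
      C Z tZ

/-- The class `FG` of finitely generated (Alexandrov-discrete) topological spaces. -/
def FGClass : TopClass.{u} := fun X tX => @AlexandrovDiscrete X tX

/-- A filter space: a topological space with precisely one accumulation (non-isolated) point,
namely `a`. -/
def IsFilterSpace (X : Type u) [TopologicalSpace X] (a : X) : Prop :=
  ¬ IsOpen ({a} : Set X) ∧ ∀ x : X, x ≠ a → IsOpen ({x} : Set X)

/-- A filter subspace of a filter space `A` with accumulation point `a`: a subset containing `a`
such that `a` is in the closure of `B \ {a}`. -/
def IsFilterSubspace (A : Type u) [TopologicalSpace A] (a : A) (B : Set A) : Prop :=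
  a ∈ B ∧ a ∈ closure (B \ {a})


open Topology

/-- `X` is generated by (final with respect to continuous maps from) `B`. -/
def Gen (B : Type u) (tB : TopologicalSpace B) (X : Type u) (tX : TopologicalSpace X) : Prop :=
  ∀ U : Set X, (∀ f : B → X, @Continuous B X tB tX f → @IsOpen B tB (f ⁻¹' U)) →
    @IsOpen X tX U

theorem isQuotientMap_iff_old {X Y : Type*} {f : X → Y} [TopologicalSpace X]
    [TopologicalSpace Y] :
    IsQuotientMap f ↔ Function.Surjective f ∧ ∀ s : Set Y, IsOpen s ↔ IsOpen (f ⁻¹' s) := by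
  rw [Topology.isQuotientMap_iff, Topology.isCoinducing_iff, and_comm]
  simp only [iff_comm]

section GenLemmas

variable {B : Type u} {tB : TopologicalSpace B}

lemma gen_coreflective : IsCoreflective (fun X tX => Gen B tB X tX) := by
  constructor
  · intro ι X t hX U hU
    letI := @instTopologicalSpaceSigma ι X t
    rw [isOpen_sigma_iff]
    intro i
    refine hX i _ (fun f hf => ?_)
    have hc : @Continuous B _ tB _ ((Sigma.mk i) ∘ f) :=
      Continuous.comp continuous_sigmaMk hf
    exact hU _ hc
  · intro X Y tX tY f hf hX U hU
    rw [(isQuotientMap_iff_old.mp hf).2 U]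
    exact hX _ (fun g hg => hU (f ∘ g) (Continuous.comp hf.continuous hg))

lemma gen_self : Gen B tB B tB := fun _ hU => hU id continuous_id

lemma gen_of_homeo {X : Type u} {tX : TopologicalSpace X}
    (h : @Homeomorph X B tX tB) : Gen B tB X tX := by
  intro U hU
  have h1 : @IsOpen B tB (h.symm ⁻¹' U) := hU h.symm h.symm.continuous
  have h2 : U = (h : X → B) ⁻¹' (h.symm ⁻¹' U) := by
    ext x; simp
  rw [h2]
  exact h.continuous.isOpen_preimage _ h1

/-- On a subsingleton, sets pull back trivially. -/
lemma subsingleton_preimage {P : Type v} [Subsingleton P] {W : Type u} (g : W → P)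
    (s : Set P) : g ⁻¹' s = ∅ ∨ g ⁻¹' s = Set.univ := by
  rcases Set.eq_empty_or_nonempty s with h | h
  · left; simp [h]
  · right
    obtain ⟨p, hp⟩ := h
    ext w; simp [Subsingleton.elim (g w) p, hp]

lemma C_punit {C : TopClass.{u}} (hC : IsCoreflective C) (hB : C B tB) (hne : Nonempty B) :
    C PUnit.{u+1} ⊥ := by
  obtain ⟨b₀⟩ := hne
  refine hC.2 B PUnit tB ⊥ (fun _ => PUnit.unit) ?_ hB
  rw [isQuotientMap_iff_old]
  refine ⟨fun u => ⟨b₀, rfl⟩, fun s => ?_⟩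
  have h1 : @IsOpen PUnit ⊥ s := by
    letI : TopologicalSpace PUnit := (⊥ : TopologicalSpace PUnit)
    exact isOpen_discrete s
  have h2 : @IsOpen B tB ((fun (_ : B) => PUnit.unit) ⁻¹' s) := by
    rcases subsingleton_preimage (fun (_ : B) => PUnit.unit) s with h | h
    · rw [h]; exact isOpen_empty
    · rw [h]; exact isOpen_univ
  exact ⟨fun _ => h2, fun _ => h1⟩

lemma gen_mem_CH {X : Type u} {tX : TopologicalSpace X} (hne : Nonempty B)
    (hX : Gen B tB X tX) : CH (singleClass B tB) X tX := by
  intro C hC hA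
  have hB : C B tB := hA B tB ⟨Homeomorph.refl B⟩
  have hP : C PUnit.{u+1} ⊥ := C_punit hC hB hne
  let ι : Type u := {f : B → X // @Continuous B X tB tX f} ⊕ X
  let T : ι → Type u := fun i => Sum.rec (fun _ => B) (fun _ => PUnit.{u+1}) i
  let t : (i : ι) → TopologicalSpace (T i) := fun i =>
    Sum.rec (fun _ => tB) (fun _ => (⊥ : TopologicalSpace PUnit)) i
  have hT : ∀ i, C (T i) (t i) := by
    rintro (f | x)
    · exact hB
    · exact hP
  have hSig : C ((i : ι) × T i) (@instTopologicalSpaceSigma ι T t) := hC.1 ι T t hT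
  let q : ((i : ι) × T i) → X := fun w =>
    match w with
    | ⟨Sum.inl f, b⟩ => f.1 b
    | ⟨Sum.inr x, _⟩ => x
  refine hC.2 ((i : ι) × T i) X (@instTopologicalSpaceSigma ι T t) tX q ?_ hSig
  rw [@isQuotientMap_iff_old _ _ q (@instTopologicalSpaceSigma ι T t) tX]
  constructor
  · intro x; exact ⟨⟨Sum.inr x, PUnit.unit⟩, rfl⟩
  · intro s
    constructor
    · intro hs
      rw [@isOpen_sigma_iff ι T t]
      rintro (f | x)
      · exact @Continuous.isOpen_preimage B X tB tX f.1 f.2 s hs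
      · exact @isOpen_discrete _ (⊥ : TopologicalSpace PUnit.{u+1}) _ _
    · intro hs
      rw [@isOpen_sigma_iff ι T t] at hs
      refine hX s (fun f hf => ?_)
      have h := hs (Sum.inl ⟨f, hf⟩)
      exact h

lemma CH_mem_gen {X : Type u} {tX : TopologicalSpace X}
    (hX : CH (singleClass B tB) X tX) : Gen B tB X tX := by
  refine hX (fun X' tX' => Gen B tB X' tX') gen_coreflective ?_
  rintro Y tY ⟨h⟩
  exact gen_of_homeo h

lemma CH_iff_gen {X : Type u} {tX : TopologicalSpace X} (hne : Nonempty B) :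
    CH (singleClass B tB) X tX ↔ Gen B tB X tX :=
  ⟨CH_mem_gen, gen_mem_CH hne⟩

end GenLemmas



section Glue

variable {A : Type u} {tA : TopologicalSpace A}
variable {Zh : Type u} {tZh : TopologicalSpace Zh}
variable {Yc : Type u} {tY : TopologicalSpace Yc}

/-- If `Y` embeds into a member of `CH({A})` and `X` is `Y`-generated, then `X ∈ SCH({A})`. -/
lemma gen_to_SCH (hneA : Nonempty A)
    (hZh : CH (singleClass A tA) Zh tZh)
    (e : Yc → Zh) (he : @Topology.IsEmbedding Yc Zh tY tZh e)
    {X : Type u} {tX : TopologicalSpace X} (hX : Gen Yc tY X tX) :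
    SCH (singleClass A tA) X tX := by
  classical
  let G : Type u := {g : Yc → X // @Continuous Yc X tY tX g}
  let ι₂ : Type u := X ⊕ G
  let T₂ : ι₂ → Type u := fun i => Sum.rec (fun _ => PUnit.{u+1}) (fun _ => Zh) i
  let t₂ : (i : ι₂) → TopologicalSpace (T₂ i) := fun i =>
    Sum.rec (fun _ => (⊥ : TopologicalSpace PUnit)) (fun _ => tZh) i
  let ZX : Type u := X ⊕ (G × {w : Zh // w ∉ Set.range e})
  let q₂ : ((i : ι₂) × T₂ i) → ZX := fun w =>
    match w with
    | ⟨Sum.inl x, _⟩ => Sum.inl x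
    | ⟨Sum.inr g, z⟩ =>
        if h : ∃ y, e y = z then Sum.inl (g.1 h.choose)
        else Sum.inr (g, ⟨z, by simpa [Set.mem_range] using h⟩)
  let tZX : TopologicalSpace ZX :=
    TopologicalSpace.coinduced q₂ (@instTopologicalSpaceSigma ι₂ T₂ t₂)
  have hq_e : ∀ (g : G) (y : Yc), q₂ ⟨Sum.inr g, e y⟩ = Sum.inl (g.1 y) := by
    intro g y
    have h : ∃ y', e y' = e y := ⟨y, rfl⟩
    simp only [q₂, dif_pos h]
    exact congrArg Sum.inl (congrArg g.1 (@Topology.IsEmbedding.injective Yc Zh tY tZh e he _ _ h.choose_spec))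
  have hopen_iff : ∀ s : Set ZX, @IsOpen ZX tZX s ↔
      @IsOpen _ (@instTopologicalSpaceSigma ι₂ T₂ t₂) (q₂ ⁻¹' s) := fun s => Iff.rfl
  have hr : ∀ g : G, @Continuous Zh ZX tZh tZX (fun z => q₂ ⟨Sum.inr g, z⟩) := by
    intro g
    rw [@continuous_def Zh ZX tZh tZX]
    intro s hs
    rw [hopen_iff, @isOpen_sigma_iff ι₂ T₂ t₂] at hs
    exact hs (Sum.inr g)
  have hZX : CH (singleClass A tA) ZX tZX := by
    intro C hC hA'
    have hB : C A tA := hA' A tA ⟨@Homeomorph.refl A tA⟩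
    have hP : C PUnit.{u+1} ⊥ := C_punit hC hB hneA
    have hT : ∀ i, C (T₂ i) (t₂ i) := by
      rintro (x | g)
      · exact hP
      · exact hZh C hC hA'
    have hSig := hC.1 ι₂ T₂ t₂ hT
    refine hC.2 _ ZX _ tZX q₂ ?_ hSig
    rw [@isQuotientMap_iff_old _ _ q₂ (@instTopologicalSpaceSigma ι₂ T₂ t₂) tZX]
    constructor
    · rintro (x | ⟨g, z⟩)
      · exact ⟨⟨Sum.inl x, PUnit.unit⟩, rfl⟩
      · refine ⟨⟨Sum.inr g, z.1⟩, ?_⟩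
        have h : ¬ ∃ y, e y = z.1 := by simpa [Set.mem_range] using z.2
        simp only [q₂, dif_neg h]
    · intro s; exact hopen_iff s
  have hemb : @Topology.IsEmbedding X ZX tX tZX Sum.inl := by
    rw [@Topology.isEmbedding_iff X ZX tX tZX]
    refine ⟨?_, Sum.inl_injective⟩
    rw [@Topology.isInducing_iff X ZX tX tZX]
    apply TopologicalSpace.ext_iff.mpr
    intro V
    rw [@isOpen_induced_iff X ZX tZX V Sum.inl]
    constructor
    · -- V open in tX → extension W
      intro hV
      have hOg : ∀ g : G, ∃ O : Set Zh, @IsOpen Zh tZh O ∧ e ⁻¹' O = g.1 ⁻¹' V := by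
        intro g
        have h1 : @IsOpen Yc tY (g.1 ⁻¹' V) :=
          @Continuous.isOpen_preimage Yc X tY tX g.1 g.2 V hV
        exact (@Topology.IsInducing.isOpen_iff Yc Zh e tZh tY
          (@Topology.IsEmbedding.toIsInducing Yc Zh tY tZh e he) (g.1 ⁻¹' V)).mp h1
      choose Og hOgOpen hOgV using hOg
      let W : Set ZX := fun w =>
        match w with
        | Sum.inl x => x ∈ V
        | Sum.inr (g, pz) => pz.1 ∈ Og g
      refine ⟨W, ?_, ?_⟩
      · rw [hopen_iff, @isOpen_sigma_iff ι₂ T₂ t₂]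
        rintro (x | g)
        · exact @isOpen_discrete _ (⊥ : TopologicalSpace PUnit.{u+1}) _ _
        · have hset : (Sigma.mk (Sum.inr g)) ⁻¹' (q₂ ⁻¹' W) = Og g := by
            ext z
            by_cases h : ∃ y, e y = z
            · have hz : q₂ ⟨Sum.inr g, z⟩ = Sum.inl (g.1 h.choose) := by
                simp only [q₂, dif_pos h]
              simp only [Set.mem_preimage, hz]
              show g.1 h.choose ∈ V ↔ z ∈ Og g
              have : h.choose ∈ e ⁻¹' (Og g) ↔ h.choose ∈ g.1 ⁻¹' V := by
                rw [hOgV g]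
              have h2 := h.choose_spec
              constructor
              · intro hgv
                have := this.mpr hgv
                rwa [Set.mem_preimage, h2] at this
              · intro hog
                exact this.mp (by rwa [Set.mem_preimage, h2])
            · have hz : q₂ ⟨Sum.inr g, z⟩
                  = Sum.inr (g, ⟨z, by simpa [Set.mem_range] using h⟩) := by
                simp only [q₂, dif_neg h]
              simp only [Set.mem_preimage, hz]
              exact Iff.rfl
          show @IsOpen Zh tZh _
          rw [hset]
          exact hOgOpen g
      · ext x
        show W (Sum.inl x) ↔ x ∈ V
        exact Iff.rfl
    · -- extension → open in tX
      rintro ⟨W, hW, hpre⟩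
      refine hX V (fun g hg => ?_)
      have hset : g ⁻¹' V = e ⁻¹' ((fun z => q₂ ⟨Sum.inr ⟨g, hg⟩, z⟩) ⁻¹' W) := by
        ext y
        simp only [Set.mem_preimage, hq_e ⟨g, hg⟩ y]
        rw [← hpre]
        exact Iff.rfl
      rw [hset]
      have h1 : @IsOpen Zh tZh ((fun z => q₂ ⟨Sum.inr ⟨g, hg⟩, z⟩) ⁻¹' W) :=
        @Continuous.isOpen_preimage Zh ZX tZh tZX _ (hr ⟨g, hg⟩) W hW
      exact @Continuous.isOpen_preimage Yc Zh tY tZh e (@Topology.IsEmbedding.continuous Yc Zh e tY tZh he) _ h1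
  exact ⟨ZX, tZX, Sum.inl, hZX, hemb⟩

end Glue


attribute [local instance 10] Classical.propDecidable

section Tree

variable {A : Type u}

/-- Strings: finite lists of (marked point, chosen point) pairs. -/
abbrev DT (A : Type u) : Type u := List (A × A)

/-- Carrier of the auxiliary tree space: `(p, false)` are nodes, `(q, true)` passengers. -/
abbrev ZC (A : Type u) : Type u := List (A × A) × Bool

noncomputable def phi (p : DT A) (m : A) (c : A) : ZC A :=
  if c = m then (p, false) else (p ++ [(m, c)], false)

noncomputable def psi (Ost : Set A) (q : DT A) (y : A) : ZC A :=
  if y ∈ Ost then (q, true) else (q, false)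

abbrev genIdx (A : Type u) : Type u := (DT A × A) ⊕ DT A

noncomputable def genMap (Ost : Set A) : genIdx A → A → ZC A :=
  Sum.elim (fun pm => phi pm.1 pm.2) (psi Ost)

noncomputable def tZC (tA : TopologicalSpace A) (Ost : Set A) : TopologicalSpace (ZC A) :=
  TopologicalSpace.coinduced (fun w : (_ : genIdx A) × A => genMap Ost w.1 w.2)
    (@instTopologicalSpaceSigma (genIdx A) (fun _ => A) (fun _ => tA))

noncomputable def eY : DT A → ZC A := fun q => if q = [] then (q, false) else (q, true)

noncomputable def tYD (tA : TopologicalSpace A) (Ost : Set A) : TopologicalSpace (DT A) :=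
  TopologicalSpace.induced eY (tZC tA Ost)

def ValidF (tA : TopologicalSpace A) (F : DT A → A → Set A) : Prop :=
  ∀ p m, @IsOpen A tA (F p m) ∧ m ∈ F p m

def AboveFrom (F : DT A → A → Set A) : DT A → DT A → Prop
  | _, [] => True
  | pre, mc :: rest => (mc.2 ∈ F pre mc.1 ∧ mc.2 ≠ mc.1) ∧ AboveFrom F (pre ++ [mc]) rest

def Above (F : DT A → A → Set A) (s : DT A) : Prop := AboveFrom F [] s

def VF (F : DT A → A → Set A) : Set (ZC A) := {z | Above F z.1}

variable {tA : TopologicalSpace A} {Ost : Set A}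

lemma isOpen_ZC_iff {O : Set (ZC A)} :
    @IsOpen (ZC A) (tZC tA Ost) O ↔
      (∀ p m, @IsOpen A tA (phi p m ⁻¹' O)) ∧ (∀ q, @IsOpen A tA (psi Ost q ⁻¹' O)) := by
  rw [show @IsOpen (ZC A) (tZC tA Ost) O ↔ _ from
    @isOpen_coinduced _ _ (@instTopologicalSpaceSigma (genIdx A) (fun _ => A) (fun _ => tA)) O
      (fun w : (_ : genIdx A) × A => genMap Ost w.1 w.2)]
  rw [@isOpen_sigma_iff (genIdx A) (fun _ => A) (fun _ => tA)]
  constructor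
  · intro h
    exact ⟨fun p m => h (Sum.inl (p, m)), fun q => h (Sum.inr q)⟩
  · rintro ⟨h1, h2⟩ (pm | q)
    · exact h1 pm.1 pm.2
    · exact h2 q

lemma aboveFrom_append (F : DT A → A → Set A) (s : DT A) (mc : A × A) :
    ∀ pre, AboveFrom F pre (s ++ [mc]) ↔
      AboveFrom F pre s ∧ (mc.2 ∈ F (pre ++ s) mc.1 ∧ mc.2 ≠ mc.1) := by
  induction s with
  | nil =>
      intro pre
      show ((mc.2 ∈ F pre mc.1 ∧ mc.2 ≠ mc.1) ∧ True) ↔ True ∧ _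
      simp
  | cons hd tl ih =>
      intro pre
      show ((hd.2 ∈ F pre hd.1 ∧ hd.2 ≠ hd.1) ∧ AboveFrom F (pre ++ [hd]) (tl ++ [mc])) ↔ _
      rw [ih (pre ++ [hd])]
      have hp : pre ++ [hd] ++ tl = pre ++ hd :: tl := by simp
      rw [hp]
      show _ ↔ ((hd.2 ∈ F pre hd.1 ∧ hd.2 ≠ hd.1) ∧ AboveFrom F (pre ++ [hd]) tl) ∧ _
      tauto

lemma above_append {F : DT A → A → Set A} {s : DT A} {mc : A × A} :
    Above F (s ++ [mc]) ↔ Above F s ∧ (mc.2 ∈ F s mc.1 ∧ mc.2 ≠ mc.1) := by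
  have := aboveFrom_append F s mc []
  simpa [Above] using this

lemma isOpen_VF {F : DT A → A → Set A} (hv : ValidF tA F) :
    @IsOpen (ZC A) (tZC tA Ost) (VF F) := by
  rw [isOpen_ZC_iff]
  constructor
  · intro p m
    have hset : phi p m ⁻¹' (VF F) = if Above F p then F p m else (∅ : Set A) := by
      ext c
      simp only [Set.mem_preimage, phi, VF, Set.mem_setOf_eq]
      by_cases hc : c = m
      · simp only [if_pos hc]
        by_cases hp : Above F p
        · simp [hp, hc, (hv p m).2]
        · simp [hp]
      · simp only [if_neg hc]
        show Above F (p ++ [(m, c)]) ↔ _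
        rw [above_append]
        by_cases hp : Above F p
        · simp [hp, hc]
        · simp [hp]
    rw [hset]
    by_cases hp : Above F p
    · simpa [hp] using (hv p m).1
    · simp only [if_neg hp]; exact @isOpen_empty A tA
  · intro q
    have hset : psi Ost q ⁻¹' (VF F) = if Above F q then Set.univ else (∅ : Set A) := by
      ext y
      simp only [Set.mem_preimage, psi]
      by_cases hy : y ∈ Ost <;> by_cases hq : Above F q <;>
        simp [hy, hq, VF, Set.mem_setOf_eq]
    rw [hset]
    by_cases hq : Above F q
    · simp only [if_pos hq]; exact @isOpen_univ A tA
    · simp only [if_neg hq]; exact @isOpen_empty A tA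

lemma isOpen_passenger (hOst : @IsOpen A tA Ost) (q : DT A) :
    @IsOpen (ZC A) (tZC tA Ost) {z : ZC A | z = (q, true)} := by
  rw [isOpen_ZC_iff]
  constructor
  · intro p m
    have hset : phi p m ⁻¹' {z : ZC A | z = (q, true)} = (∅ : Set A) := by
      ext c
      simp only [Set.mem_preimage, phi, Set.mem_setOf_eq]
      by_cases hc : c = m <;> simp [hc, Prod.ext_iff]
    rw [hset]; exact @isOpen_empty A tA
  · intro q'
    have hset : psi Ost q' ⁻¹' {z : ZC A | z = (q, true)} =
        if q' = q then Ost else (∅ : Set A) := by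
      ext y
      simp only [Set.mem_preimage, psi, Set.mem_setOf_eq]
      by_cases hy : y ∈ Ost <;> by_cases hq : q' = q <;> simp [hy, hq, Prod.ext_iff]
    rw [hset]
    by_cases hq : q' = q
    · simpa [hq] using hOst
    · simp only [if_neg hq]; exact @isOpen_empty A tA

lemma forcing (hOstNC : ¬ @IsOpen A tA Ostᶜ) {O : Set (ZC A)}
    (hO : @IsOpen (ZC A) (tZC tA Ost) O) {q : DT A} (hn : ((q, false) : ZC A) ∈ O) :
    ((q, true) : ZC A) ∈ O := by
  by_contra hd
  have h := (isOpen_ZC_iff.mp hO).2 q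
  have hset : psi Ost q ⁻¹' O = Ostᶜ := by
    ext y
    simp only [Set.mem_preimage, psi]
    by_cases hy : y ∈ Ost <;> simp [hy, hn, hd]
  rw [hset] at h
  exact hOstNC h

/-- The canonical front of an open set. -/
noncomputable def FO (O : Set (ZC A)) : DT A → A → Set A :=
  fun p m => if ((p, false) : ZC A) ∈ O then {c | phi p m c ∈ O} else Set.univ

lemma validF_FO {O : Set (ZC A)} (hO : @IsOpen (ZC A) (tZC tA Ost) O) :
    ValidF tA (FO O) := by
  intro p m
  constructor
  · simp only [FO]
    by_cases hp : ((p, false) : ZC A) ∈ O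
    · simp only [if_pos hp]
      have : {c | phi p m c ∈ O} = phi p m ⁻¹' O := rfl
      rw [this]
      exact (isOpen_ZC_iff.mp hO).1 p m
    · simp only [if_neg hp]; exact @isOpen_univ A tA
  · simp only [FO]
    by_cases hp : ((p, false) : ZC A) ∈ O
    · simp only [if_pos hp, Set.mem_setOf_eq, phi, if_pos rfl]
      exact hp
    · simp [hp]

lemma above_FO_node {O : Set (ZC A)} (hroot : (([], false) : ZC A) ∈ O) :
    ∀ s : DT A, Above (FO O) s → ((s, false) : ZC A) ∈ O := by
  intro s
  induction s using List.reverseRecOn with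
  | nil => intro _; exact hroot
  | append_singleton t mc ih =>
      intro hs
      rw [above_append] at hs
      obtain ⟨ht, hmem, hne⟩ := hs
      have hnode := ih ht
      simp only [FO, if_pos hnode, Set.mem_setOf_eq] at hmem
      rwa [phi, if_neg hne] at hmem

lemma isOpen_YD_iff (hOst : @IsOpen A tA Ost) (hOstNC : ¬ @IsOpen A tA Ostᶜ) {W : Set (DT A)} :
    @IsOpen (DT A) (tYD tA Ost) W ↔
      (([] : DT A) ∈ W → ∃ F, ValidF tA F ∧ {s | Above F s} ⊆ W) := by
  constructor
  · intro hW hroot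
    obtain ⟨O, hO, hpre⟩ := (@isOpen_induced_iff (DT A) (ZC A) (tZC tA Ost) W eY).mp hW
    have hrootO : (([], false) : ZC A) ∈ O := by
      have h0 : ([] : DT A) ∈ eY ⁻¹' O := by rw [hpre]; exact hroot
      simpa [eY] using h0
    refine ⟨FO O, validF_FO hO, ?_⟩
    intro s hs
    have hnode := above_FO_node hrootO s hs
    rw [← hpre]
    show eY s ∈ O
    by_cases h : s = []
    · subst h; simpa [eY] using hrootO
    · have := forcing hOstNC hO hnode
      simpa [eY, h] using this
  · intro h
    rw [tYD, @isOpen_induced_iff (DT A) (ZC A) (tZC tA Ost) W eY]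
    have hWtrue : @IsOpen (ZC A) (tZC tA Ost) {z : ZC A | z.2 = true ∧ z.1 ∈ W} := by
      have heq : {z : ZC A | z.2 = true ∧ z.1 ∈ W} = ⋃ q ∈ W, {z : ZC A | z = (q, true)} := by
        ext z
        simp only [Set.mem_setOf_eq, Set.mem_iUnion]
        constructor
        · rintro ⟨h2, h1⟩
          refine ⟨z.1, h1, ?_⟩
          show z = (z.1, true)
          exact Prod.ext_iff.mpr ⟨rfl, h2⟩
        · rintro ⟨q, hq, hz⟩
          have hz' : z = (q, true) := hz
          subst hz'
          exact ⟨rfl, hq⟩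
      rw [heq]
      exact @isOpen_biUnion _ _ (tZC tA Ost) _ _
        (fun q _ => isOpen_passenger hOst q)
    by_cases hroot : ([] : DT A) ∈ W
    · obtain ⟨F, hvF, hF⟩ := h hroot
      refine ⟨VF F ∪ {z : ZC A | z.2 = true ∧ z.1 ∈ W}, ?_, ?_⟩
      · exact @IsOpen.union _ _ _ (tZC tA Ost) (isOpen_VF hvF) hWtrue
      · ext s
        simp only [Set.mem_preimage, Set.mem_union]
        by_cases hs : s = []
        · subst hs
          simp only [eY, if_pos rfl]
          constructor
          · intro _; exact hroot
          · intro _; left; show Above F []; trivial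
        · simp only [eY, if_neg hs, Set.mem_setOf_eq]
          constructor
          · rintro (h1 | ⟨_, h2⟩)
            · exact hF h1
            · exact h2
          · intro hsW; right; exact ⟨by trivial, hsW⟩
    · refine ⟨{z : ZC A | z.2 = true ∧ z.1 ∈ W}, hWtrue, ?_⟩
      ext s
      simp only [Set.mem_preimage, Set.mem_setOf_eq]
      by_cases hs : s = []
      · subst hs
        simp only [eY, if_pos rfl]
        constructor
        · intro h'
          exact absurd h'.1 (by simp)
        · intro h1; exact absurd h1 hroot
      · simp only [eY, if_neg hs]
        exact ⟨fun h' => h'.2, fun h2 => ⟨by trivial, h2⟩⟩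

lemma isOpen_YD_singleton (hOst : @IsOpen A tA Ost) {q : DT A} (hq : q ≠ []) :
    @IsOpen (DT A) (tYD tA Ost) {q} := by
  rw [tYD, @isOpen_induced_iff (DT A) (ZC A) (tZC tA Ost) _ eY]
  refine ⟨{z : ZC A | z = (q, true)}, isOpen_passenger hOst q, ?_⟩
  ext s
  simp only [Set.mem_preimage, Set.mem_setOf_eq, Set.mem_singleton_iff]
  by_cases hs : s = []
  · subst hs
    constructor
    · intro h'
      have h'' : (([] : DT A), false) = (q, true) := by simpa [eY] using h'
      exact absurd (congrArg Prod.snd h'') (by simp)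
    · intro h'
      exact absurd h'.symm hq
  · simp only [eY, if_neg hs, Prod.ext_iff]
    constructor
    · rintro ⟨h1, _⟩; exact h1
    · rintro rfl; exact ⟨rfl, by trivial⟩

lemma not_isOpen_YD_root (hOst : @IsOpen A tA Ost) (hOstNC : ¬ @IsOpen A tA Ostᶜ)
    {m₀ : A} (hm₀ : ¬ @IsOpen A tA {m₀}) :
    ¬ @IsOpen (DT A) (tYD tA Ost) {([] : DT A)} := by
  intro hop
  obtain ⟨F, hvF, hF⟩ := (isOpen_YD_iff hOst hOstNC).mp hop rfl
  have h1 := (hvF [] m₀).1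
  have h2 := (hvF [] m₀).2
  have hex : ∃ c ∈ F [] m₀, c ≠ m₀ := by
    by_contra hc
    push_neg at hc
    have : F [] m₀ = {m₀} := Set.eq_singleton_iff_unique_mem.mpr ⟨h2, hc⟩
    rw [this] at h1
    exact hm₀ h1
  obtain ⟨c, hc1, hc2⟩ := hex
  have habove : Above F [(m₀, c)] := by
    show AboveFrom F [] [(m₀, c)]
    exact ⟨⟨hc1, hc2⟩, trivial⟩
  have : ([(m₀, c)] : DT A) ∈ ({([] : DT A)} : Set (DT A)) := hF habove
  simp at this

lemma embedding_eY : @Topology.IsEmbedding (DT A) (ZC A) (tYD tA Ost) (tZC tA Ost) eY := by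
  rw [@Topology.isEmbedding_iff (DT A) (ZC A) (tYD tA Ost) (tZC tA Ost)]
  constructor
  · rw [@Topology.isInducing_iff (DT A) (ZC A) (tYD tA Ost) (tZC tA Ost)]
    rfl
  · intro q q' h
    have h1 := congrArg Prod.fst h
    have h2 := congrArg Prod.snd h
    by_cases hq : q = [] <;> by_cases hq' : q' = []
    · rw [hq, hq']
    · simp only [eY, if_pos hq, if_neg hq'] at h2
      exact absurd h2 (by simp)
    · simp only [eY, if_neg hq, if_pos hq'] at h2
      exact absurd h2 (by simp)
    · simp only [eY, if_neg hq, if_neg hq'] at h1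
      exact h1

lemma ZC_mem_CH (hOstNE : Ost.Nonempty) (m₀ : A) :
    CH (singleClass A tA) (ZC A) (tZC tA Ost) := by
  intro C hC hA'
  have hB : C A tA := hA' A tA ⟨@Homeomorph.refl A tA⟩
  have hSig := hC.1 (genIdx A) (fun _ => A) (fun _ => tA) (fun _ => hB)
  refine hC.2 _ (ZC A) _ (tZC tA Ost)
    (fun w : (_ : genIdx A) × A => genMap Ost w.1 w.2) ?_ hSig
  rw [@isQuotientMap_iff_old _ _ _
    (@instTopologicalSpaceSigma (genIdx A) (fun _ => A) (fun _ => tA)) (tZC tA Ost)]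
  constructor
  · rintro ⟨q, b⟩
    cases b
    · refine ⟨⟨Sum.inl (q, m₀), m₀⟩, ?_⟩
      show phi q m₀ m₀ = (q, false)
      simp [phi]
    · obtain ⟨o, ho⟩ := hOstNE
      refine ⟨⟨Sum.inr q, o⟩, ?_⟩
      show psi Ost q o = (q, true)
      simp [psi, ho]
  · intro s; rfl

end Tree


attribute [local instance 10] Classical.propDecidable

section Approx

variable {A Z : Type u}

noncomputable def capprox (tA : TopologicalSpace A) (tZ : TopologicalSpace Z) (S : Set Z)
    (o : Ordinal.{u}) : Set Z :=
  S ∪ {w | ∃ f : A → Z, @Continuous A Z tA tZ f ∧ ∃ a : A, f a = w ∧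
    a ∈ @closure A tA (f ⁻¹' (⋃ β : {β : Ordinal.{u} // β < o}, capprox tA tZ S β.1))}
termination_by o
decreasing_by exact β.2

variable (tA : TopologicalSpace A) (tZ : TopologicalSpace Z) (S : Set Z)

noncomputable def cprev (o : Ordinal.{u}) : Set Z :=
  ⋃ β : {β : Ordinal.{u} // β < o}, capprox tA tZ S β.1

lemma capprox_eq (o : Ordinal.{u}) :
    capprox tA tZ S o = S ∪ {w | ∃ f : A → Z, @Continuous A Z tA tZ f ∧ ∃ a : A, f a = w ∧
      a ∈ @closure A tA (f ⁻¹' cprev tA tZ S o)} := by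
  rw [capprox, cprev]

lemma mem_cprev {w : Z} {o : Ordinal.{u}} :
    w ∈ cprev tA tZ S o ↔ ∃ β < o, w ∈ capprox tA tZ S β := by
  simp only [cprev, Set.mem_iUnion]
  constructor
  · rintro ⟨⟨β, hβ⟩, hw⟩; exact ⟨β, hβ, hw⟩
  · rintro ⟨β, hβ, hw⟩; exact ⟨⟨β, hβ⟩, hw⟩

lemma S_subset_capprox (o : Ordinal.{u}) : S ⊆ capprox tA tZ S o := by
  rw [capprox_eq]; exact Set.subset_union_left

def CCset : Set Z := {z | ∃ o : Ordinal.{u}, z ∈ capprox tA tZ S o}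

lemma S_subset_CCset : S ⊆ CCset tA tZ S :=
  fun z hz => ⟨0, S_subset_capprox tA tZ S 0 hz⟩

noncomputable def rnk (z : Z) : Ordinal.{u} := sInf {o | z ∈ capprox tA tZ S o}

lemma mem_capprox_rnk {z : Z} (hz : z ∈ CCset tA tZ S) :
    z ∈ capprox tA tZ S (rnk tA tZ S z) := csInf_mem hz

lemma rank_lt_of_mem_cprev {y : Z} {o : Ordinal.{u}} (hy : y ∈ cprev tA tZ S o) :
    rnk tA tZ S y < o := by
  obtain ⟨β, hβ, hy⟩ := (mem_cprev tA tZ S).mp hy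
  exact lt_of_le_of_lt (csInf_le' hy) hβ

lemma cprev_subset_CCset {o : Ordinal.{u}} : cprev tA tZ S o ⊆ CCset tA tZ S := by
  intro y hy
  obtain ⟨β, _, hy⟩ := (mem_cprev tA tZ S).mp hy
  exact ⟨β, hy⟩

lemma not_mem_cprev_rnk {z : Z} : z ∉ cprev tA tZ S (rnk tA tZ S z) :=
  fun h => absurd (rank_lt_of_mem_cprev tA tZ S h) (lt_irrefl _)

lemma exists_wit {z : Z} (hz : z ∈ CCset tA tZ S) (hzS : z ∉ S) :
    ∃ fa : (A → Z) × A, @Continuous A Z tA tZ fa.1 ∧ fa.1 fa.2 = z ∧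
      fa.2 ∈ @closure A tA (fa.1 ⁻¹' cprev tA tZ S (rnk tA tZ S z)) := by
  have h := mem_capprox_rnk tA tZ S hz
  rw [capprox_eq] at h
  rcases h with h | h
  · exact absurd h hzS
  · obtain ⟨f, hf, a, hfa, ha⟩ := h
    exact ⟨(f, a), hf, hfa, ha⟩

lemma step_CCset {f : A → Z} (hf : @Continuous A Z tA tZ f) {a : A}
    (ha : a ∈ @closure A tA (f ⁻¹' CCset tA tZ S)) : f a ∈ CCset tA tZ S := by
  set Θ : Ordinal.{u} :=
    ⨆ w : ↥(f ⁻¹' CCset tA tZ S), Order.succ (rnk tA tZ S (f w.1)) with hΘ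
  have hsub : f ⁻¹' CCset tA tZ S ⊆ f ⁻¹' cprev tA tZ S Θ := by
    intro a' ha'
    have h1 : f a' ∈ capprox tA tZ S (rnk tA tZ S (f a')) := mem_capprox_rnk tA tZ S ha'
    have h2 : Order.succ (rnk tA tZ S (f a')) ≤ Θ :=
      le_ciSup (Ordinal.bddAbove_range _) (⟨a', ha'⟩ : ↥(f ⁻¹' CCset tA tZ S))
    exact (mem_cprev tA tZ S).mpr ⟨_, lt_of_lt_of_le (Order.lt_succ _) h2, h1⟩
  have ha2 : a ∈ @closure A tA (f ⁻¹' cprev tA tZ S Θ) := by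
    letI := tA
    exact closure_mono hsub ha
  refine ⟨Θ, ?_⟩
  rw [capprox_eq]
  exact Or.inr ⟨f, hf, a, rfl, ha2⟩

lemma isClosed_CCset (hgen : Gen A tA Z tZ) : @IsClosed Z tZ (CCset tA tZ S) := by
  have hopen : @IsOpen Z tZ (CCset tA tZ S)ᶜ := by
    refine hgen _ (fun f hf => ?_)
    letI := tA
    have hcl : @IsClosed A tA (f ⁻¹' CCset tA tZ S) := by
      refine isClosed_of_closure_subset ?_
      intro a ha
      exact step_CCset tA tZ S hf ha
    show @IsOpen A tA (f ⁻¹' (CCset tA tZ S)ᶜ)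
    have heq : f ⁻¹' (CCset tA tZ S)ᶜ = (f ⁻¹' CCset tA tZ S)ᶜ := rfl
    rw [heq]
    exact hcl.isOpen_compl
  letI := tZ
  exact isOpen_compl_iff.mp hopen

lemma closureS_subset_CCset (hgen : Gen A tA Z tZ) :
    @closure Z tZ S ⊆ CCset tA tZ S := by
  letI := tZ
  exact closure_minimal (S_subset_CCset tA tZ S) (isClosed_CCset tA tZ S hgen)

/-- Chosen witness for a point of the transfinite closure. -/
noncomputable def witF [Nonempty A] (z : Z) : (A → Z) × A :=
  if h : z ∈ CCset tA tZ S ∧ z ∉ S then (exists_wit tA tZ S h.1 h.2).choose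
  else ((fun _ => z : A → Z), Classical.arbitrary A)

lemma witF_cont [Nonempty A] (z : Z) : @Continuous A Z tA tZ (witF tA tZ S z).1 := by
  unfold witF
  split
  · next h => exact (exists_wit tA tZ S h.1 h.2).choose_spec.1
  · exact @continuous_const A Z tA tZ z

lemma witF_pt [Nonempty A] (z : Z) : (witF tA tZ S z).1 (witF tA tZ S z).2 = z := by
  unfold witF
  split
  · next h => exact (exists_wit tA tZ S h.1 h.2).choose_spec.2.1
  · rfl

lemma witF_closure [Nonempty A] {z : Z} (hz : z ∈ CCset tA tZ S) (hzS : z ∉ S) :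
    (witF tA tZ S z).2 ∈
      @closure A tA ((witF tA tZ S z).1 ⁻¹' cprev tA tZ S (rnk tA tZ S z)) := by
  have hh : z ∈ CCset tA tZ S ∧ z ∉ S := ⟨hz, hzS⟩
  unfold witF
  rw [dif_pos hh]
  exact (exists_wit tA tZ S hh.1 hh.2).choose_spec.2.2

/-- The automaton step. -/
noncomputable def stepF [Nonempty A] : Option (Z ⊕ Z) → A × A → Option (Z ⊕ Z) := fun st l =>
  match st with
  | some (Sum.inr z) =>
      if l.1 = (witF tA tZ S z).2 then
        (if (witF tA tZ S z).1 l.2 ∈ S then some (Sum.inl ((witF tA tZ S z).1 l.2))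
         else if (witF tA tZ S z).1 l.2 ∈ CCset tA tZ S then
           some (Sum.inr ((witF tA tZ S z).1 l.2))
         else none)
      else none
  | st' => st'

lemma stepF_go [Nonempty A] (z : Z) (l : A × A) :
    stepF tA tZ S (some (Sum.inr z)) l =
      if l.1 = (witF tA tZ S z).2 then
        (if (witF tA tZ S z).1 l.2 ∈ S then some (Sum.inl ((witF tA tZ S z).1 l.2))
         else if (witF tA tZ S z).1 l.2 ∈ CCset tA tZ S then
           some (Sum.inr ((witF tA tZ S z).1 l.2))
         else none)
      else none := rfl

noncomputable def runF [Nonempty A] (x₁ : Z) (s : List (A × A)) : Option (Z ⊕ Z) :=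
  List.foldl (stepF tA tZ S) (some (Sum.inr x₁)) s

lemma runF_nil [Nonempty A] (x₁ : Z) : runF tA tZ S x₁ [] = some (Sum.inr x₁) := rfl

lemma runF_append [Nonempty A] (x₁ : Z) (s : List (A × A)) (l : A × A) :
    runF tA tZ S x₁ (s ++ [l]) = stepF tA tZ S (runF tA tZ S x₁ s) l := by
  unfold runF
  rw [List.foldl_append]
  rfl

lemma runF_inv [Nonempty A] (x₁ : Z) (hx₁ : x₁ ∈ CCset tA tZ S ∧ x₁ ∉ S)
    (s : List (A × A)) :
    (∀ z, runF tA tZ S x₁ s = some (Sum.inr z) → z ∈ CCset tA tZ S ∧ z ∉ S) ∧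
    (∀ y, runF tA tZ S x₁ s = some (Sum.inl y) → y ∈ S) := by
  induction s using List.reverseRecOn with
  | nil =>
      constructor
      · intro z hz
        rw [runF_nil] at hz
        obtain rfl : x₁ = z := by
          have := Option.some.inj hz
          exact Sum.inr.inj this
        exact hx₁
      · intro y hy
        rw [runF_nil] at hy
        exact absurd (Option.some.inj hy) (by simp)
  | append_singleton s l ih =>
      rw [runF_append]
      rcases hrs : runF tA tZ S x₁ s with _ | w
      · constructor
        · intro z hz; exact absurd hz (by simp [stepF])
        · intro y hy; exact absurd hy (by simp [stepF])
      · rcases w with y | z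
        · constructor
          · intro z hz
            simp only [stepF] at hz
            exact absurd (Option.some.inj hz) (by simp)
          · intro y' hy'
            simp only [stepF] at hy'
            have := Sum.inl.inj (Option.some.inj hy')
            rw [← this]
            exact ih.2 y hrs
        · have hz := ih.1 z hrs
          constructor
          · intro z' hz'
            simp only [stepF] at hz'
            by_cases h1 : l.1 = (witF tA tZ S z).2
            · rw [if_pos h1] at hz'
              by_cases h2 : (witF tA tZ S z).1 l.2 ∈ S
              · rw [if_pos h2] at hz'
                exact absurd (Option.some.inj hz') (by simp)
              · rw [if_neg h2] at hz'
                by_cases h3 : (witF tA tZ S z).1 l.2 ∈ CCset tA tZ S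
                · rw [if_pos h3] at hz'
                  have := Sum.inr.inj (Option.some.inj hz')
                  rw [← this]
                  exact ⟨h3, h2⟩
                · rw [if_neg h3] at hz'
                  exact absurd hz' (by simp)
            · rw [if_neg h1] at hz'
              exact absurd hz' (by simp)
          · intro y' hy'
            simp only [stepF] at hy'
            by_cases h1 : l.1 = (witF tA tZ S z).2
            · rw [if_pos h1] at hy'
              by_cases h2 : (witF tA tZ S z).1 l.2 ∈ S
              · rw [if_pos h2] at hy'
                have := Sum.inl.inj (Option.some.inj hy')
                rw [← this]
                exact h2
              · rw [if_neg h2] at hy'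
                by_cases h3 : (witF tA tZ S z).1 l.2 ∈ CCset tA tZ S
                · rw [if_pos h3] at hy'
                  exact absurd (Option.some.inj hy') (by simp)
                · rw [if_neg h3] at hy'
                  exact absurd hy' (by simp)
            · rw [if_neg h1] at hy'
              exact absurd hy' (by simp)

end Approx


attribute [local instance 10] Classical.propDecidable

section Domination

variable {A Z X : Type u}

noncomputable def xofF (eX : X → Z) (U : Set X) (x₁' : X) (y : Z) : X :=
  if h : ∃ x', eX x' = y ∧ x' ∉ U then h.choose else x₁'

lemma xofF_spec {eX : X → Z} {U : Set X} {x₁' : X} {y : Z}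
    (h : ∃ x', eX x' = y ∧ x' ∉ U) :
    eX (xofF eX U x₁' y) = y ∧ xofF eX U x₁' y ∉ U := by
  unfold xofF
  rw [dif_pos h]
  exact ⟨h.choose_spec.1, h.choose_spec.2⟩

noncomputable def gF (tA : TopologicalSpace A) (tZ : TopologicalSpace Z) (S : Set Z)
    [Nonempty A] (eX : X → Z) (U : Set X) (x₁' : X) (x₁ : Z) (s : List (A × A)) : X :=
  match runF tA tZ S x₁ s with
  | some (Sum.inl y) => xofF eX U x₁' y
  | _ => x₁'

theorem domination {tA : TopologicalSpace A} {tZ : TopologicalSpace Z}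
    {tX : TopologicalSpace X}
    (hne : Nonempty A) {Ost : Set A} (hOst : @IsOpen A tA Ost)
    (hOstNC : ¬ @IsOpen A tA Ostᶜ)
    (hZgen : Gen A tA Z tZ) {eX : X → Z}
    (heX : @Topology.IsEmbedding X Z tX tZ eX)
    {U : Set X} (hU : ¬ @IsOpen X tX U) :
    ∃ g : DT A → X, @Continuous (DT A) X (tYD tA Ost) tX g ∧
      ¬ @IsOpen (DT A) (tYD tA Ost) (g ⁻¹' U) := by
  haveI := hne
  set S : Set Z := eX '' Uᶜ with hS
  have heXc : @Continuous X Z tX tZ eX := @Topology.IsEmbedding.continuous X Z eX tX tZ heX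
  have heXi : Function.Injective eX := @Topology.IsEmbedding.injective X Z tX tZ eX heX
  -- find the bad point x₁'
  have hex : ∃ x', x' ∈ U ∧ eX x' ∈ @closure Z tZ S := by
    by_contra hc
    push_neg at hc
    apply hU
    have hsep : ∀ x' : ↥U, ∃ O : Set Z, @IsOpen Z tZ O ∧ eX x'.1 ∈ O ∧ O ∩ S = ∅ := by
      intro x'
      have h1 := hc x'.1 x'.2
      rw [@mem_closure_iff Z tZ] at h1
      push_neg at h1
      obtain ⟨O, hO, hmem, hint⟩ := h1
      exact ⟨O, hO, hmem, hint⟩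
    choose O hOopen hOmem hOint using hsep
    have hUeq : U = eX ⁻¹' (⋃ x' : ↥U, O x') := by
      ext x
      simp only [Set.mem_preimage, Set.mem_iUnion]
      constructor
      · intro hx; exact ⟨⟨x, hx⟩, hOmem ⟨x, hx⟩⟩
      · rintro ⟨x', hx'⟩
        by_contra hxU
        have hmem2 : eX x ∈ O x' ∩ S := ⟨hx', ⟨x, hxU, rfl⟩⟩
        rw [hOint x'] at hmem2; exact hmem2
    rw [hUeq]
    exact @Continuous.isOpen_preimage X Z tX tZ eX heXc _
      (@isOpen_iUnion Z _ tZ _ hOopen)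
  obtain ⟨x₁', hx₁'U, hx₁cl⟩ := hex
  set x₁ : Z := eX x₁' with hx₁def
  have hx₁CC : x₁ ∈ CCset tA tZ S := closureS_subset_CCset tA tZ S hZgen hx₁cl
  have hx₁S : x₁ ∉ S := by
    rintro ⟨x'', hx'', heq⟩
    have hxx : x'' = x₁' := heXi (heq.trans hx₁def)
    rw [hxx] at hx''
    exact hx'' hx₁'U
  have hx₁ : x₁ ∈ CCset tA tZ S ∧ x₁ ∉ S := ⟨hx₁CC, hx₁S⟩
  -- the map g
  refine ⟨gF tA tZ S eX U x₁' x₁, ?_, ?_⟩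
  · -- continuity
    rw [@continuous_def (DT A) X (tYD tA Ost) tX]
    intro V₁ hV₁
    rw [isOpen_YD_iff hOst hOstNC]
    intro hroot
    have hgnil : gF tA tZ S eX U x₁' x₁ [] = x₁' := by
      unfold gF
      rw [runF_nil]
    have hx₁'V : x₁' ∈ V₁ := by rw [← hgnil]; exact hroot
    obtain ⟨V', hV', hpre⟩ :=
      (@Topology.IsInducing.isOpen_iff X Z eX tZ tX
        (@Topology.IsEmbedding.toIsInducing X Z tX tZ eX heX) V₁).mp hV₁
    have hx₁V' : x₁ ∈ V' := by
      rw [← hpre] at hx₁'V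
      exact hx₁'V
    -- the front
    set F : DT A → A → Set A := fun p m =>
      match runF tA tZ S x₁ p with
      | some (Sum.inr z) =>
          if z ∈ V' ∧ m = (witF tA tZ S z).2 then (witF tA tZ S z).1 ⁻¹' V' else Set.univ
      | _ => Set.univ
      with hF
    have hFeq : ∀ p m, F p m = (match runF tA tZ S x₁ p with
      | some (Sum.inr z) =>
          if z ∈ V' ∧ m = (witF tA tZ S z).2 then (witF tA tZ S z).1 ⁻¹' V' else Set.univ
      | _ => Set.univ) := fun p m => rfl
    have hvF : ValidF tA F := by
      intro p m
      rw [hFeq]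
      rcases hrp : runF tA tZ S x₁ p with _ | w
      · exact ⟨@isOpen_univ A tA, Set.mem_univ m⟩
      · rcases w with y | z
        · exact ⟨@isOpen_univ A tA, Set.mem_univ m⟩
        · show (if z ∈ V' ∧ m = (witF tA tZ S z).2 then (witF tA tZ S z).1 ⁻¹' V'
            else Set.univ) |> (fun Q => @IsOpen A tA Q ∧ m ∈ Q)
          by_cases hcond : z ∈ V' ∧ m = (witF tA tZ S z).2
          · rw [if_pos hcond]
            refine ⟨@Continuous.isOpen_preimage A Z tA tZ _ (witF_cont tA tZ S z) _ hV', ?_⟩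
            rw [hcond.2, Set.mem_preimage, witF_pt tA tZ S z]
            exact hcond.1
          · rw [if_neg hcond]
            exact ⟨@isOpen_univ A tA, Set.mem_univ m⟩
    refine ⟨F, hvF, ?_⟩
    -- invariant along above-F strings
    have hVinv : ∀ s : DT A, Above F s →
        (∀ z, runF tA tZ S x₁ s = some (Sum.inr z) → z ∈ V') ∧
        (∀ y, runF tA tZ S x₁ s = some (Sum.inl y) → y ∈ V') := by
      intro s
      induction s using List.reverseRecOn with
      | nil =>
          intro _
          constructor
          · intro z hz
            have := Sum.inr.inj (Option.some.inj hz)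
            rw [← this]; exact hx₁V'
          · intro y hy
            exact absurd (Option.some.inj hy) (by simp)
      | append_singleton s l ih =>
          intro habv
          rw [above_append] at habv
          obtain ⟨hs, hmem, hne2⟩ := habv
          have ihs := ih hs
          rw [runF_append]
          rcases hrs : runF tA tZ S x₁ s with _ | w
          · constructor
            · intro z hz; exact absurd hz (by simp [stepF])
            · intro y hy; exact absurd hy (by simp [stepF])
          · rcases w with y | z
            · constructor
              · intro z hz
                simp only [stepF] at hz
                exact absurd (Option.some.inj hz) (by simp)
              · intro y' hy'
                simp only [stepF] at hy'
                have := Sum.inl.inj (Option.some.inj hy')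
                rw [← this]
                exact ihs.2 y hrs
            · have hzV' : z ∈ V' := ihs.1 z hrs
              -- compute F s l.1
              rw [hFeq, hrs] at hmem
              have hmem' : l.2 ∈ (if z ∈ V' ∧ l.1 = (witF tA tZ S z).2 then
                  (witF tA tZ S z).1 ⁻¹' V' else Set.univ) := hmem
              by_cases h1 : l.1 = (witF tA tZ S z).2
              · have hcond : z ∈ V' ∧ l.1 = (witF tA tZ S z).2 := ⟨hzV', h1⟩
                rw [if_pos hcond] at hmem'
                have hval : (witF tA tZ S z).1 l.2 ∈ V' := hmem'
                constructor
                · intro z' hz'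
                  simp only [stepF, if_pos h1] at hz'
                  by_cases h2 : (witF tA tZ S z).1 l.2 ∈ S
                  · rw [if_pos h2] at hz'
                    exact absurd (Option.some.inj hz') (by simp)
                  · rw [if_neg h2] at hz'
                    by_cases h3 : (witF tA tZ S z).1 l.2 ∈ CCset tA tZ S
                    · rw [if_pos h3] at hz'
                      have := Sum.inr.inj (Option.some.inj hz')
                      rw [← this]; exact hval
                    · rw [if_neg h3] at hz'
                      exact absurd hz' (by simp)
                · intro y' hy'
                  simp only [stepF, if_pos h1] at hy'
                  by_cases h2 : (witF tA tZ S z).1 l.2 ∈ S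
                  · rw [if_pos h2] at hy'
                    have := Sum.inl.inj (Option.some.inj hy')
                    rw [← this]; exact hval
                  · rw [if_neg h2] at hy'
                    by_cases h3 : (witF tA tZ S z).1 l.2 ∈ CCset tA tZ S
                    · rw [if_pos h3] at hy'
                      exact absurd hy' (by simp)
                    · rw [if_neg h3] at hy'
                      exact absurd hy' (by simp)
              · constructor
                · intro z' hz'
                  simp only [stepF, if_neg h1] at hz'
                  exact absurd hz' (by simp)
                · intro y' hy'
                  simp only [stepF, if_neg h1] at hy'
                  exact absurd hy' (by simp)
    -- above-F strings map into V₁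
    intro s hs
    show gF tA tZ S eX U x₁' x₁ s ∈ V₁
    have hsV := hVinv s hs
    have hSinv := (runF_inv tA tZ S x₁ hx₁ s).2
    unfold gF
    rcases hrs : runF tA tZ S x₁ s with _ | w
    · exact hx₁'V
    · rcases w with y | z
      · have hyV' : y ∈ V' := hsV.2 y hrs
        have hyS : y ∈ S := hSinv y hrs
        have hex2 : ∃ x', eX x' = y ∧ x' ∉ U := by
          obtain ⟨x'', hx'', heq⟩ := hyS
          exact ⟨x'', heq, hx''⟩
        have hspec := xofF_spec (eX := eX) (U := U) (x₁' := x₁') hex2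
        show xofF eX U x₁' y ∈ V₁
        rw [← hpre]
        show eX (xofF eX U x₁' y) ∈ V'
        rw [hspec.1]
        exact hyV'
      · exact hx₁'V
  · -- non-openness of g ⁻¹' U
    intro hop
    have hroot : ([] : DT A) ∈ (gF tA tZ S eX U x₁' x₁) ⁻¹' U := by
      show gF tA tZ S eX U x₁' x₁ [] ∈ U
      unfold gF
      rw [runF_nil]
      exact hx₁'U
    obtain ⟨F, hvF, hF⟩ := (isOpen_YD_iff hOst hOstNC).mp hop hroot
    -- main transfinite induction
    have main : ∀ (o : Ordinal.{u}) (z : Z), z ∈ CCset tA tZ S → z ∉ S →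
        rnk tA tZ S z = o → ∀ s : DT A, Above F s →
        runF tA tZ S x₁ s = some (Sum.inr z) →
        ∃ s' : DT A, ∃ y : Z, Above F s' ∧ runF tA tZ S x₁ s' = some (Sum.inl y) := by
      intro o
      induction o using Ordinal.induction with
      | h o IH =>
        intro z hzCC hzS hzr s hsabv hsrun
        have hwcl := witF_closure tA tZ S hzCC hzS
        have hVopen := (hvF s (witF tA tZ S z).2).1
        have hVmem := (hvF s (witF tA tZ S z).2).2
        rw [@mem_closure_iff A tA] at hwcl
        obtain ⟨c, hcF, hcprev⟩ := hwcl (F s (witF tA tZ S z).2) hVopen hVmem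
        have hcne : c ≠ (witF tA tZ S z).2 := by
          intro hceq
          apply not_mem_cprev_rnk tA tZ S (z := z)
          have hmem2 : (witF tA tZ S z).1 c ∈ cprev tA tZ S (rnk tA tZ S z) := hcprev
          rw [hceq, witF_pt tA tZ S z] at hmem2
          exact hmem2
        set y' : Z := (witF tA tZ S z).1 c with hy'
        have habv' : Above F (s ++ [((witF tA tZ S z).2, c)]) := by
          rw [above_append]
          exact ⟨hsabv, hcF, hcne⟩
        have hrun' : runF tA tZ S x₁ (s ++ [((witF tA tZ S z).2, c)]) =
            stepF tA tZ S (some (Sum.inr z)) ((witF tA tZ S z).2, c) := by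
          rw [runF_append, hsrun]
        have hstep : stepF tA tZ S (some (Sum.inr z)) ((witF tA tZ S z).2, c) =
            (if y' ∈ S then some (Sum.inl y')
             else if y' ∈ CCset tA tZ S then some (Sum.inr y') else none) := by
          rw [stepF_go]
          rw [if_pos (rfl : (((witF tA tZ S z).2, c) : A × A).1 = (witF tA tZ S z).2)]
        by_cases h2 : y' ∈ S
        · refine ⟨s ++ [((witF tA tZ S z).2, c)], y', habv', ?_⟩
          rw [hrun', hstep, if_pos h2]
        · have h3 : y' ∈ CCset tA tZ S := cprev_subset_CCset tA tZ S hcprev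
          have hrank : rnk tA tZ S y' < o := by
            rw [← hzr]
            exact rank_lt_of_mem_cprev tA tZ S hcprev
          refine IH (rnk tA tZ S y') hrank y' h3 h2 rfl
            (s ++ [((witF tA tZ S z).2, c)]) habv' ?_
          rw [hrun', hstep, if_neg h2, if_pos h3]
    obtain ⟨s', y, hs'abv, hs'run⟩ :=
      main (rnk tA tZ S x₁) x₁ hx₁CC hx₁S rfl [] trivial (runF_nil tA tZ S x₁)
    have hs'U : gF tA tZ S eX U x₁' x₁ s' ∈ U := hF hs'abv
    have hyS : y ∈ S := (runF_inv tA tZ S x₁ hx₁ s').2 y hs'run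
    have hex2 : ∃ x', eX x' = y ∧ x' ∉ U := by
      obtain ⟨x'', hx'', heq⟩ := hyS
      exact ⟨x'', heq, hx''⟩
    have hspec := xofF_spec (eX := eX) (U := U) (x₁' := x₁') hex2
    have hgval : gF tA tZ S eX U x₁' x₁ s' = xofF eX U x₁' y := by
      unfold gF
      rw [hs'run]
    rw [hgval] at hs'U
    exact hspec.2 hs'U

end Domination


attribute [local instance 10] Classical.propDecidable

section Derive

variable {A : Type u} [tA : TopologicalSpace A]

lemma infinite_of_not_alexandrov (hfg : ¬ AlexandrovDiscrete A) : Infinite A := by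
  by_contra h
  have : Finite A := not_infinite_iff_finite.mp h
  exact hfg ⟨fun S hS => Set.Finite.isOpen_sInter (Set.toFinite S) hS⟩

lemma exists_nonisolated (hfg : ¬ AlexandrovDiscrete A) : ∃ m₀ : A, ¬ IsOpen {m₀} := by
  by_contra h
  push_neg at h
  refine hfg ⟨fun S hS => ?_⟩
  have hall : ∀ T : Set A, IsOpen T := by
    intro T
    have : T = ⋃ x ∈ T, {x} := by simp
    rw [this]
    exact isOpen_biUnion (fun x _ => h x)
  exact hall _

lemma exists_open_not_closed (hfg : ¬ AlexandrovDiscrete A) :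
    ∃ O : Set A, IsOpen O ∧ ¬ IsOpen Oᶜ := by
  by_contra h
  push_neg at h
  refine hfg ⟨fun S hS => ?_⟩
  have : ⋂₀ S = (⋃₀ (compl '' S))ᶜ := by
    rw [Set.sUnion_image]
    simp [Set.sInter_eq_biInter, Set.compl_iUnion]
  rw [this]
  refine h _ (isOpen_sUnion ?_)
  rintro T ⟨O, hO, rfl⟩
  exact h O (hS O hO)

end Derive

section Main

theorem stmt9' (A : Type u) [tA : TopologicalSpace A] (hfg : ¬ AlexandrovDiscrete A) :
    ∃ (Y : Type u) (tY : TopologicalSpace Y) (b : Y),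
      ((¬ @IsOpen Y tY {b}) ∧ ∀ x : Y, x ≠ b → @IsOpen Y tY {x}) ∧
      Cardinal.mk Y = Cardinal.mk A ∧
      ∀ (X : Type u) (tX : TopologicalSpace X),
        CH (singleClass Y tY) X tX ↔ SCH (singleClass A tA) X tX := by
  haveI hinf : Infinite A := infinite_of_not_alexandrov hfg
  haveI hne : Nonempty A := inferInstance
  obtain ⟨m₀, hm₀⟩ := exists_nonisolated hfg
  obtain ⟨Ost, hOst, hOstNC⟩ := exists_open_not_closed hfg
  have hOstNE : Ost.Nonempty := by
    rcases Set.eq_empty_or_nonempty Ost with h | h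
    · exfalso
      apply hOstNC
      rw [h, Set.compl_empty]
      exact isOpen_univ
    · exact h
  refine ⟨DT A, tYD tA Ost, [], ⟨?_, ?_⟩, ?_, ?_⟩
  · exact not_isOpen_YD_root hOst hOstNC hm₀
  · intro q hq
    exact isOpen_YD_singleton hOst hq
  · haveI : Infinite (A × A) := inferInstance
    have h1 : Cardinal.mk (A × A) = Cardinal.mk A := by
      rw [Cardinal.mk_prod]
      simp [Cardinal.mul_eq_self (Cardinal.aleph0_le_mk A)]
    calc Cardinal.mk (List (A × A)) = Cardinal.mk (A × A) := Cardinal.mk_list_eq_mk _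
      _ = Cardinal.mk A := h1
  · intro X tX
    constructor
    · intro hCH
      have hgen : Gen (DT A) (tYD tA Ost) X tX := CH_mem_gen hCH
      exact gen_to_SCH hne (ZC_mem_CH hOstNE m₀) eY embedding_eY hgen
    · rintro ⟨Z, tZ, eX, hZCH, hemb⟩
      have hZgen : Gen A tA Z tZ := CH_mem_gen hZCH
      refine gen_mem_CH ⟨([] : DT A)⟩ ?_
      intro U hUall
      by_contra hU
      obtain ⟨g, hgc, hgU⟩ := domination hne hOst hOstNC hZgen hemb hU
      exact hgU (hUall g hgc)

end Main

/-- for an arbitrary topological space `A` which is not finitely generated, there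
is a filter space `Y` of the same cardinality as `A` with `CH {Y} = SCH {A}`. -/
theorem stmt9 (A : Type u) [tA : TopologicalSpace A] (hfg : ¬ AlexandrovDiscrete A) :
    ∃ (Y : Type u) (tY : TopologicalSpace Y) (b : Y), @IsFilterSpace Y tY b ∧
      Cardinal.mk Y = Cardinal.mk A ∧
      ∀ (X : Type u) (tX : TopologicalSpace X),
        CH (singleClass Y tY) X tX ↔ SCH (singleClass A tA) X tX := by
  obtain ⟨Y, tY, b, hfs, hcard, hiff⟩ := stmt9' A hfg
  exact ⟨Y, tY, b, ⟨hfs.1, hfs.2⟩, hcard, hiff⟩
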